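/- Let R be a Noetherian ring, q a central unit of R, (σ, δ) a q-skew derivation on R, and N the prime radical of R, i.e. its largest nilpotent two-sided ideal. Suppose n is a positive integer with N^n = 0 such that {n!}_q is invertible in R. Then δ(N) ⊆ N. -/

import Mathlib

/-- `{n!}_q = ∏_{k=1}^{n} (1 + q + ⋯ + q^{k−1})`. -/
def qFactorial {R : Type*} [Ring R] (q : R) (n : ℕ) : R :=
  ((List.range n).map fun k => ∑ i ∈ Finset.range (k + 1), q ^ i).prod

namespace Stmt5Aux


variable {R : Type*} [Ring R]

theorem mulApply (f g : R ≃+* R) (x : R) : (f * g) x = f (g x) := rfl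

theorem oneApply (x : R) : (1 : R ≃+* R) x = x := rfl

theorem Epow_succ (E : R ≃+* R) (k : ℕ) (x : R) : (E ^ (k+1)) x = E ((E ^ k) x) := by
  rw [pow_succ']; rfl

theorem Epow_succ' (E : R ≃+* R) (k : ℕ) (x : R) : (E ^ (k+1)) x = (E ^ k) (E x) := by
  rw [pow_succ]; rfl

theorem delta_zero (δ : R → R) (hδadd : ∀ a b : R, δ (a + b) = δ a + δ b) : δ 0 = 0 := by
  have h : δ 0 + δ 0 = δ 0 + 0 := by rw [add_zero, ← hδadd, add_zero]
  exact add_left_cancel h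

theorem delta_one (δ : R → R) (E : R ≃+* R)
    (hleib : ∀ a b : R, δ (a * b) = δ a * b + E a * δ b) : δ 1 = 0 := by
  have h := hleib 1 1
  rw [mul_one, map_one, mul_one, one_mul] at h
  have h2 : δ 1 + δ 1 = δ 1 + 0 := by rw [add_zero, ← h]
  exact add_left_cancel h2

theorem delta_qpow (q : R) (δ : R → R) (E : R ≃+* R)
    (hleib : ∀ a b : R, δ (a * b) = δ a * b + E a * δ b)
    (hδq : δ q = 0) (k : ℕ) : δ (q ^ k) = 0 := by
  induction k with
  | zero => simpa using delta_one δ E hleib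
  | succ k ih =>
    rw [pow_succ, hleib, ih, zero_mul, hδq, mul_zero, add_zero]

theorem delta_central_mul (δ : R → R) (E : R ≃+* R)
    (hleib : ∀ a b : R, δ (a * b) = δ a * b + E a * δ b)
    (c : R) (hc : δ c = 0) (hc' : E c = c) (y : R) : δ (c * y) = c * δ y := by
  rw [hleib, hc, zero_mul, hc', zero_add]

theorem Epow_q (q : R) (E : R ≃+* R) (hEq : E q = q) (k : ℕ) : (E ^ k) q = q := by
  induction k with
  | zero => rfl
  | succ k ih => rw [Epow_succ, ih, hEq]

theorem Epow_qpow (q : R) (E : R ≃+* R) (hEq : E q = q) (k j : ℕ) :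
    (E ^ k) (q ^ j) = q ^ j := by
  rw [map_pow, Epow_q q E hEq]

theorem delta_Epow (q : R) (δ : R → R) (E : R ≃+* R)
    (hqskew : ∀ x : R, δ (E x) = q * E (δ x)) (hEq : E q = q) (k : ℕ) (x : R) :
    δ ((E ^ k) x) = q ^ k * (E ^ k) (δ x) := by
  induction k with
  | zero => simp [oneApply]
  | succ k ih =>
    rw [Epow_succ, hqskew, ih, map_mul, Epow_succ, map_pow, hEq, pow_succ', mul_assoc]

theorem Epow_inv_cancel (E : R ≃+* R) (k : ℕ) (x : R) : (E ^ k) ((E⁻¹ ^ k) x) = x := by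
  induction k generalizing x with
  | zero => rfl
  | succ k ih =>
    rw [Epow_succ, Epow_succ' E⁻¹]
    have h1 : (E⁻¹ : R ≃+* R) x = E.symm x := rfl
    rw [h1, ih, E.apply_symm_apply]




/-- Gaussian binomial style coefficients defined by recurrence. -/
def qb (q : R) : ℕ → ℕ → R
  | 0, 0 => 1
  | 0, _+1 => 0
  | m+1, 0 => qb q m 0
  | m+1, i+1 => qb q m (i+1) + q ^ (m-i) * qb q m i

theorem qb_zero (q : R) (m : ℕ) : qb q m 0 = 1 := by
  induction m with
  | zero => rfl
  | succ m ih => rw [qb, ih]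

theorem qb_big (q : R) (m i : ℕ) (h : m < i) : qb q m i = 0 := by
  induction m generalizing i with
  | zero => match i, h with
    | i+1, _ => rfl
  | succ m ih =>
    match i, h with
    | i+1, h =>
      rw [qb, ih _ (by omega), ih _ (by omega), mul_zero, add_zero]

theorem qb_one (q : R) (m : ℕ) : qb q m 1 = ∑ i ∈ Finset.range m, q ^ i := by
  induction m with
  | zero => rfl
  | succ m ih =>
    rw [qb, ih, qb_zero, mul_one, Nat.sub_zero, Finset.sum_range_succ]

theorem qb_comm (q : R) (hqc : ∀ r : R, q * r = r * q) (m i : ℕ) (r : R) :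
    qb q m i * r = r * qb q m i := by
  induction m generalizing i r with
  | zero => match i with
    | 0 => simp [qb]
    | i+1 => simp [qb]
  | succ m ih =>
    match i with
    | 0 => rw [qb_zero]; simp
    | i+1 =>
      have hc := ((Commute.pow_left (show Commute q r from hqc r) (m-i))).eq
      rw [qb, add_mul, mul_add, ih (i+1) r, mul_assoc, ih i r, ← mul_assoc, hc, mul_assoc]



theorem qb_E (q : R) (E : R ≃+* R) (hEq : E q = q) (m i : ℕ) :
    E (qb q m i) = qb q m i := by
  induction m generalizing i with
  | zero => match i with
    | 0 => simp [qb]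
    | i+1 => simp [qb]
  | succ m ih =>
    match i with
    | 0 => rw [qb_zero, map_one]
    | i+1 => rw [qb, map_add, map_mul, map_pow, hEq, ih, ih]

theorem qb_delta (q : R) (δ : R → R) (E : R ≃+* R)
    (hδadd : ∀ a b : R, δ (a + b) = δ a + δ b)
    (hleib : ∀ a b : R, δ (a * b) = δ a * b + E a * δ b)
    (hEq : E q = q) (hδq : δ q = 0) (m i : ℕ) :
    δ (qb q m i) = 0 := by
  induction m generalizing i with
  | zero => match i with
    | 0 => simpa [qb] using delta_one δ E hleib
    | i+1 => simpa [qb] using delta_zero δ hδadd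
  | succ m ih =>
    match i with
    | 0 => rw [qb_zero]; exact delta_one δ E hleib
    | i+1 =>
      rw [qb, hδadd, ih, hleib, ih, mul_zero, delta_qpow q δ E hleib hδq, zero_mul,
        zero_add, add_zero]


theorem leibniz (q : R) (δ : R → R) (E : R ≃+* R)
    (hδadd : ∀ a b : R, δ (a + b) = δ a + δ b)
    (hleib : ∀ a b : R, δ (a * b) = δ a * b + E a * δ b)
    (hqskew : ∀ x : R, δ (E x) = q * E (δ x))
    (hEq : E q = q) (hδq : δ q = 0) (hqc : ∀ r : R, q * r = r * q) (m : ℕ) :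
    ∀ a b : R, δ^[m] (a * b) =
      ∑ i ∈ Finset.range (m+1), qb q m i * ((E ^ (m-i)) (δ^[i] a) * δ^[m-i] b) := by
  induction m with
  | zero => intro a b; simp [qb_zero, oneApply]
  | succ m ih =>
    intro a b
    have hsum : ∀ (s : Finset ℕ) (f : ℕ → R), δ (∑ i ∈ s, f i) = ∑ i ∈ s, δ (f i) :=
      fun s f => map_sum (AddMonoidHom.mk' δ hδadd) f s
    have hterm : ∀ i ∈ Finset.range (m+1),
        δ (qb q m i * ((E ^ (m-i)) (δ^[i] a) * δ^[m-i] b)) =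
        (q ^ (m-i) * qb q m i) * ((E ^ (m-i)) (δ^[i+1] a) * δ^[m-i] b)
          + qb q m i * ((E ^ ((m-i)+1)) (δ^[i] a) * δ^[(m-i)+1] b) := by
      intro i hi
      rw [delta_central_mul δ E hleib _ (qb_delta q δ E hδadd hleib hEq hδq m i) (qb_E q E hEq m i),
        hleib, delta_Epow q δ E hqskew hEq, ← Function.iterate_succ_apply' δ i a,
        ← Epow_succ, ← Function.iterate_succ_apply' δ (m-i) b, mul_add]
      congr 1
      rw [mul_assoc (q ^ (m-i)), ← mul_assoc (qb q m i), qb_comm q hqc, mul_assoc]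
    calc δ^[m+1] (a*b)
        = ∑ i ∈ Finset.range (m+1),
            ((q ^ (m-i) * qb q m i) * ((E ^ (m-i)) (δ^[i+1] a) * δ^[m-i] b)
              + qb q m i * ((E ^ ((m-i)+1)) (δ^[i] a) * δ^[(m-i)+1] b)) := by
          rw [Function.iterate_succ_apply', ih, hsum]
          exact Finset.sum_congr rfl hterm
      _ = (∑ i ∈ Finset.range (m+1), (q ^ (m-i) * qb q m i) * ((E ^ (m-i)) (δ^[i+1] a) * δ^[m-i] b))
          + ∑ i ∈ Finset.range (m+1), qb q m i * ((E ^ ((m-i)+1)) (δ^[i] a) * δ^[(m-i)+1] b) :=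
          Finset.sum_add_distrib
      _ = ∑ i ∈ Finset.range (m+1+1), qb q (m+1) i * ((E ^ (m+1-i)) (δ^[i] a) * δ^[m+1-i] b) := ?_
    conv_rhs => rw [Finset.sum_range_succ']
    have e1 : ∀ i ∈ Finset.range (m+1),
        qb q (m+1) (i+1) * ((E ^ (m+1-(i+1))) (δ^[i+1] a) * δ^[m+1-(i+1)] b)
        = qb q m (i+1) * ((E ^ (m-i)) (δ^[i+1] a) * δ^[m-i] b)
          + (q ^ (m-i) * qb q m i) * ((E ^ (m-i)) (δ^[i+1] a) * δ^[m-i] b) := by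
      intro i hi
      have h2 : m+1-(i+1) = m-i := by omega
      rw [h2, qb, add_mul]
    rw [Finset.sum_congr rfl e1, Finset.sum_add_distrib]
    have e2 : ∀ i ∈ Finset.range (m+1),
        qb q m i * ((E ^ ((m-i)+1)) (δ^[i] a) * δ^[(m-i)+1] b)
        = qb q m i * ((E ^ (m+1-i)) (δ^[i] a) * δ^[m+1-i] b) := by
      intro i hi
      rw [Finset.mem_range] at hi
      have h3 : (m-i)+1 = m+1-i := by omega
      rw [h3]
    rw [Finset.sum_congr rfl e2]
    have e3 : ∑ i ∈ Finset.range (m+1), qb q m (i+1) * ((E ^ (m-i)) (δ^[i+1] a) * δ^[m-i] b)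
        = ∑ i ∈ Finset.range m, qb q m (i+1) * ((E ^ (m-i)) (δ^[i+1] a) * δ^[m-i] b) := by
      rw [Finset.sum_range_succ, qb_big q m (m+1) (by omega), zero_mul, add_zero]
    have e4 : ∑ i ∈ Finset.range (m+1), qb q m i * ((E ^ (m+1-i)) (δ^[i] a) * δ^[m+1-i] b)
        = (∑ i ∈ Finset.range m, qb q m (i+1) * ((E ^ (m+1-(i+1))) (δ^[i+1] a) * δ^[m+1-(i+1)] b))
          + qb q m 0 * ((E ^ (m+1)) (δ^[0] a) * δ^[m+1] b) := by
      rw [Finset.sum_range_succ']; simp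
    have e5 : ∀ i ∈ Finset.range m,
        qb q m (i+1) * ((E ^ (m+1-(i+1))) (δ^[i+1] a) * δ^[m+1-(i+1)] b)
        = qb q m (i+1) * ((E ^ (m-i)) (δ^[i+1] a) * δ^[m-i] b) := by
      intro i hi
      have h2 : m+1-(i+1) = m-i := by omega
      rw [h2]
    rw [e3, e4, Finset.sum_congr rfl e5, qb_zero, qb_zero]
    abel


/-- Twisted product `σ^{k-1}δ(x₁)·σ^{k-2}δ(x₂)⋯δ(x_k)`. -/
def Tw (E : R ≃+* R) (δ : R → R) : List R → R
  | [] => 1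
  | x :: xs => (E ^ xs.length) (δ x) * Tw E δ xs

theorem qFactorial_succ (q : R) (k : ℕ) :
    qFactorial q (k+1) = qFactorial q k * (∑ i ∈ Finset.range (k+1), q ^ i) := by
  unfold qFactorial
  rw [List.range_succ, List.map_append, List.prod_append]
  simp

theorem sum_qpow_comm (q : R) (hqc : ∀ r : R, q * r = r * q) (k : ℕ) (r : R) :
    (∑ i ∈ Finset.range k, q ^ i) * r = r * ∑ i ∈ Finset.range k, q ^ i := by
  rw [Finset.sum_mul, Finset.mul_sum]
  exact Finset.sum_congr rfl fun i _ => ((Commute.pow_left (show Commute q r from hqc r) i)).eq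

theorem qFactorial_comm (q : R) (hqc : ∀ r : R, q * r = r * q) (k : ℕ) (r : R) :
    qFactorial q k * r = r * qFactorial q k := by
  induction k generalizing r with
  | zero => simp [qFactorial]
  | succ k ih =>
    rw [qFactorial_succ, mul_assoc, sum_qpow_comm q hqc, ← mul_assoc, ih, mul_assoc,
      ← sum_qpow_comm q hqc, ← mul_assoc]

theorem EpowN (E : R ≃+* R) (N : TwoSidedIdeal R) (hEN : ∀ x ∈ N, E x ∈ N) (k : ℕ) :
    ∀ x ∈ N, (E ^ k) x ∈ N := by
  induction k with
  | zero => intro x hx; exact hx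
  | succ k ih => intro x hx; rw [Epow_succ]; exact hEN _ (ih x hx)

theorem keyC (q : R) (δ : R → R) (E : R ≃+* R)
    (hδadd : ∀ a b : R, δ (a + b) = δ a + δ b)
    (hleib : ∀ a b : R, δ (a * b) = δ a * b + E a * δ b)
    (hqskew : ∀ x : R, δ (E x) = q * E (δ x))
    (hEq : E q = q) (hδq : δ q = 0) (hqc : ∀ r : R, q * r = r * q)
    (N : TwoSidedIdeal R) (hEN : ∀ x ∈ N, E x ∈ N) :
    ∀ l : List R, (∀ y ∈ l, y ∈ N) →
      (∀ j, j < l.length → δ^[j] l.prod ∈ N) ∧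
      δ^[l.length] l.prod - qFactorial q l.length * Tw E δ l ∈ N := by
  intro l
  induction l with
  | nil =>
    intro _
    refine ⟨fun j hj => absurd hj (by simp), ?_⟩
    simp [Tw, qFactorial]
  | cons x xs IH =>
    intro hmem
    have hx : x ∈ N := hmem x (List.mem_cons_self)
    have hxs : ∀ y ∈ xs, y ∈ N := fun y hy => hmem y (List.mem_cons_of_mem x hy)
    obtain ⟨IH1, IH2⟩ := IH hxs
    set k := xs.length with hk
    have hlen : (x :: xs).length = k + 1 := by simp [hk]
    constructor
    · intro j hj
      rw [hlen] at hj
      rw [List.prod_cons, leibniz q δ E hδadd hleib hqskew hEq hδq hqc j x xs.prod]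
      refine N.finsetSum_mem _ _ (fun i hi => ?_)
      rw [Finset.mem_range] at hi
      rcases Nat.eq_zero_or_pos i with h0 | h1
      · subst h0
        exact N.mul_mem_left _ _ (N.mul_mem_right _ _
          (EpowN E N hEN j x hx))
      · exact N.mul_mem_left _ _ (N.mul_mem_left _ _ (IH1 (j - i) (by omega)))
    · rw [hlen, List.prod_cons, leibniz q δ E hδadd hleib hqskew hEq hδq hqc (k+1) x xs.prod]
      have h1mem : (1 : ℕ) ∈ Finset.range (k+2) := by simp
      rw [← Finset.add_sum_erase _ _ h1mem]
      set ν := δ^[k] xs.prod - qFactorial q k * Tw E δ xs with hν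
      have hνN : ν ∈ N := IH2
      have hP : δ^[k] xs.prod = qFactorial q k * Tw E δ xs + ν := by rw [hν]; abel
      have hf1 : qb q (k+1) 1 * ((E ^ (k+1-1)) (δ^[1] x) * δ^[k+1-1] xs.prod)
          = qFactorial q (k+1) * Tw E δ (x :: xs)
            + qb q (k+1) 1 * ((E ^ k) (δ x) * ν) := by
        have e0 : k + 1 - 1 = k := by omega
        rw [e0, Function.iterate_one, hP, mul_add, mul_add]
        congr 1
        rw [Tw, ← hk]
        rw [← mul_assoc ((E ^ k) (δ x)), ← qFactorial_comm q hqc, mul_assoc,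
          ← mul_assoc, qFactorial_succ, qb_one, ← qFactorial_comm q hqc, mul_assoc]
      rw [hf1]
      have hrest : (∑ i ∈ (Finset.range (k+2)).erase 1,
          qb q (k+1) i * ((E ^ (k+1-i)) (δ^[i] x) * δ^[k+1-i] xs.prod)) ∈ N := by
        refine N.finsetSum_mem _ _ (fun i hi => ?_)
        rw [Finset.mem_erase, Finset.mem_range] at hi
        obtain ⟨hne, hlt⟩ := hi
        rcases Nat.eq_zero_or_pos i with h0 | h1
        · subst h0
          exact N.mul_mem_left _ _ (N.mul_mem_right _ _ (EpowN E N hEN (k+1) x hx))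
        · have h2 : 2 ≤ i := by omega
          exact N.mul_mem_left _ _ (N.mul_mem_left _ _ (IH1 (k+1-i) (by omega)))
      have hgoal : qFactorial q (k+1) * Tw E δ (x :: xs) + qb q (k+1) 1 * ((E ^ k) (δ x) * ν)
          + (∑ i ∈ (Finset.range (k+2)).erase 1,
              qb q (k+1) i * ((E ^ (k+1-i)) (δ^[i] x) * δ^[k+1-i] xs.prod))
          - qFactorial q (k+1) * Tw E δ (x :: xs)
          = qb q (k+1) 1 * ((E ^ k) (δ x) * ν)
            + ∑ i ∈ (Finset.range (k+2)).erase 1,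
              qb q (k+1) i * ((E ^ (k+1-i)) (δ^[i] x) * δ^[k+1-i] xs.prod) := by abel
      rw [hgoal]
      exact N.add_mem (N.mul_mem_left _ _ (N.mul_mem_left _ _ hνN)) hrest


theorem Tw_mem (q : R) (δ : R → R) (E : R ≃+* R)
    (hδadd : ∀ a b : R, δ (a + b) = δ a + δ b)
    (hleib : ∀ a b : R, δ (a * b) = δ a * b + E a * δ b)
    (hqskew : ∀ x : R, δ (E x) = q * E (δ x))
    (hEq : E q = q) (hδq : δ q = 0) (hqc : ∀ r : R, q * r = r * q)
    (N : TwoSidedIdeal R) (hEN : ∀ x ∈ N, E x ∈ N) (n : ℕ)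
    (hNn : ∀ l : List R, l.length = n → (∀ y ∈ l, y ∈ N) → l.prod = 0)
    (hfac : IsUnit (qFactorial q n)) :
    ∀ l : List R, l.length = n → (∀ y ∈ l, y ∈ N) → Tw E δ l ∈ N := by
  intro l hlen hmem
  obtain ⟨-, h2⟩ := keyC q δ E hδadd hleib hqskew hEq hδq hqc N hEN l hmem
  rw [hlen, hNn l hlen hmem] at h2
  have hz : δ^[n] (0 : R) = 0 := Function.iterate_fixed (delta_zero δ hδadd) n
  rw [hz, zero_sub] at h2
  have h3 : qFactorial q n * Tw E δ l ∈ N := by simpa using N.neg_mem h2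
  obtain ⟨u, hu⟩ := hfac
  have h4 : Tw E δ l = ↑u⁻¹ * (qFactorial q n * Tw E δ l) := by
    rw [← hu, ← mul_assoc, Units.inv_mul, one_mul]
  rw [h4]
  exact N.mul_mem_left _ _ h3

theorem key2 (q : R) (δ : R → R) (E : R ≃+* R)
    (hleib : ∀ a b : R, δ (a * b) = δ a * b + E a * δ b)
    (hqskew : ∀ x : R, δ (E x) = q * E (δ x))
    (hEq : E q = q) (hδq : δ q = 0)
    (N : TwoSidedIdeal R) (hEinvN : ∀ x ∈ N, (E⁻¹ : R ≃+* R) x ∈ N)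
    (k : ℕ) (x : R) (hx : x ∈ N) :
    ∃ z ∈ N, (E ^ k) (δ z) = δ x := by
  refine ⟨q ^ k * ((E⁻¹ ^ k) x), N.mul_mem_left _ _ (EpowN E⁻¹ N hEinvN k x hx), ?_⟩
  rw [delta_central_mul δ E hleib _ (delta_qpow q δ E hleib hδq k) (by rw [map_pow, hEq]),
    map_mul, Epow_qpow q E hEq, ← delta_Epow q δ E hqskew hEq, Epow_inv_cancel]

def mixP (E : R ≃+* R) (δ : R → R) : List R → List R → R
  | x :: xs, t :: ts => (E ^ xs.length) (δ x) * t * mixP E δ xs ts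
  | _, _ => 1

def mixD (δ : R → R) : List R → List R → R
  | x :: xs, t :: ts => δ x * t * mixD δ xs ts
  | _, _ => 1

theorem keyP (q : R) (δ : R → R) (E : R ≃+* R)
    (hleib : ∀ a b : R, δ (a * b) = δ a * b + E a * δ b)
    (N : TwoSidedIdeal R) (hEN : ∀ x ∈ N, E x ∈ N) :
    ∀ ws : List R, (∀ y ∈ ws, y ∈ N) → ∀ ts : List R, ws.length = ts.length →
    ∃ (vs : List R) (tl ν : R), vs.length = ws.length ∧ (∀ y ∈ vs, y ∈ N) ∧ ν ∈ N ∧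
      mixP E δ ws ts = Tw E δ vs * tl + ν := by
  intro ws
  induction ws with
  | nil =>
    intro _ ts _
    exact ⟨[], 1, 0, rfl, by simp, N.zero_mem, by simp [mixP, Tw]⟩
  | cons w ws IH =>
    intro hmem ts hlen
    match ts, hlen with
    | t :: ts, hlen =>
      have hw : w ∈ N := hmem w (List.mem_cons_self)
      have hws : ∀ y ∈ ws, y ∈ N := fun y hy => hmem y (List.mem_cons_of_mem w hy)
      obtain ⟨vs, tl, ν, hvlen, hvmem, hνN, hmix⟩ := IH hws ts (by simpa using hlen)
      set k := ws.length with hk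
      set s : R := (E⁻¹ ^ k) t with hs
      have hid : (E ^ k) (δ w) * t = (E ^ k) (δ (w * s)) - (E ^ (k+1)) w * (E ^ k) (δ s) := by
        have h := congrArg (E ^ k : R ≃+* R) (hleib w s)
        rw [map_add, map_mul, map_mul, Epow_inv_cancel, ← Epow_succ' E k w] at h
        rw [h]
        abel
      refine ⟨(w * s) :: vs, tl,
        (E ^ k) (δ (w * s)) * ν
          - (E ^ (k+1)) w * (E ^ k) (δ s) * (Tw E δ vs * tl + ν), ?_, ?_, ?_, ?_⟩
      · simp [hvlen, hk]
      · intro y hy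
        rcases List.mem_cons.mp hy with h | h
        · subst h; exact N.mul_mem_right _ _ hw
        · exact hvmem y h
      · refine N.sub_mem (N.mul_mem_left _ _ hνN) ?_
        rw [mul_assoc]
        exact N.mul_mem_right _ _ (EpowN E N hEN (k+1) w hw)
      · rw [mixP, hmix, hid, Tw, hvlen]
        noncomm_ring

theorem mixD_eq_mixP (q : R) (δ : R → R) (E : R ≃+* R)
    (hleib : ∀ a b : R, δ (a * b) = δ a * b + E a * δ b)
    (hqskew : ∀ x : R, δ (E x) = q * E (δ x))
    (hEq : E q = q) (hδq : δ q = 0)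
    (N : TwoSidedIdeal R) (hEinvN : ∀ x ∈ N, (E⁻¹ : R ≃+* R) x ∈ N) :
    ∀ xs : List R, (∀ y ∈ xs, y ∈ N) → ∀ ts : List R, xs.length = ts.length →
    ∃ zs : List R, zs.length = xs.length ∧ (∀ y ∈ zs, y ∈ N) ∧
      mixP E δ zs ts = mixD δ xs ts := by
  intro xs
  induction xs with
  | nil =>
    intro _ ts _
    exact ⟨[], rfl, by simp, by cases ts <;> simp [mixP, mixD]⟩
  | cons x xs IH =>
    intro hmem ts hlen
    match ts, hlen with
    | t :: ts, hlen =>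
      have hx : x ∈ N := hmem x (List.mem_cons_self)
      have hxs : ∀ y ∈ xs, y ∈ N := fun y hy => hmem y (List.mem_cons_of_mem x hy)
      obtain ⟨zs, hzlen, hzmem, hzeq⟩ := IH hxs ts (by simpa using hlen)
      obtain ⟨z, hzN, hze⟩ := key2 q δ E hleib hqskew hEq hδq N hEinvN xs.length x hx
      refine ⟨z :: zs, by simp [hzlen], ?_, ?_⟩
      · intro y hy
        rcases List.mem_cons.mp hy with h | h
        · subst h; exact hzN
        · exact hzmem y h
      · rw [mixP, mixD, hzlen, hze, hzeq]

theorem mixD_mem (q : R) (δ : R → R) (E : R ≃+* R)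
    (hδadd : ∀ a b : R, δ (a + b) = δ a + δ b)
    (hleib : ∀ a b : R, δ (a * b) = δ a * b + E a * δ b)
    (hqskew : ∀ x : R, δ (E x) = q * E (δ x))
    (hEq : E q = q) (hδq : δ q = 0) (hqc : ∀ r : R, q * r = r * q)
    (N : TwoSidedIdeal R) (hEN : ∀ x ∈ N, E x ∈ N)
    (hEinvN : ∀ x ∈ N, (E⁻¹ : R ≃+* R) x ∈ N) (n : ℕ)
    (hNn : ∀ l : List R, l.length = n → (∀ y ∈ l, y ∈ N) → l.prod = 0)
    (hfac : IsUnit (qFactorial q n))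
    (xs ts : List R) (hxslen : xs.length = n) (htslen : ts.length = n)
    (hmem : ∀ y ∈ xs, y ∈ N) : mixD δ xs ts ∈ N := by
  obtain ⟨zs, hzlen, hzmem, hzeq⟩ :=
    mixD_eq_mixP q δ E hleib hqskew hEq hδq N hEinvN xs hmem ts (by omega)
  obtain ⟨vs, tl, ν, hvlen, hvmem, hνN, hmix⟩ :=
    keyP q δ E hleib N hEN zs hzmem ts (by omega)
  rw [← hzeq, hmix]
  exact N.add_mem (N.mul_mem_right _ _
    (Tw_mem q δ E hδadd hleib hqskew hEq hδq hqc N hEN n hNn hfac vs (by omega) hvmem)) hνN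

end Stmt5Aux

open Stmt5Aux in
theorem stmt_5 {R : Type*} [Ring R] [IsNoetherianRing R]
    (q : R) (hq : IsUnit q) (hqc : ∀ r : R, q * r = r * q)
    (σ : R →+* R) (hσ : Function.Bijective σ)
    (δ : R → R) (hδadd : ∀ a b : R, δ (a + b) = δ a + δ b)
    (hleib : ∀ a b : R, δ (a * b) = δ a * b + σ a * δ b)
    (hqskew : ∀ x : R, δ (σ x) = q * σ (δ x)) (hσq : σ q = q) (hδq : δ q = 0)
    (N : TwoSidedIdeal R)
    -- `N` contains every nilpotent two-sided ideal of `R`: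
    (hlargest : ∀ (J : TwoSidedIdeal R) (m : ℕ), 0 < m →
      (∀ l : List R, l.length = m → (∀ y ∈ l, y ∈ J) → l.prod = 0) → J ≤ N)
    (n : ℕ) (hn : 0 < n)
    -- `N^n = 0`:
    (hNn : ∀ l : List R, l.length = n → (∀ y ∈ l, y ∈ N) → l.prod = 0)
    (hfac : IsUnit (qFactorial q n)) :
    ∀ x ∈ N, δ x ∈ N := by
  classical
  set E : R ≃+* R := RingEquiv.ofBijective σ hσ with hEdef
  have hE : ∀ y : R, E y = σ y := fun _ => rfl
  have hleibE : ∀ a b : R, δ (a * b) = δ a * b + E a * δ b := by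
    intro a b; rw [hE]; exact hleib a b
  have hqskewE : ∀ y : R, δ (E y) = q * E (δ y) := by
    intro y; rw [hE, hE]; exact hqskew y
  have hEq : E q = q := hσq
  -- `σ(N) ⊆ N` :
  have hEN : ∀ x ∈ N, E x ∈ N := by
    let J₁ : TwoSidedIdeal R := TwoSidedIdeal.mk' {y | (E⁻¹ : R ≃+* R) y ∈ N}
      (by simp only [Set.mem_setOf_eq, map_zero]; exact N.zero_mem)
      (fun {a b} ha hb => by
        simp only [Set.mem_setOf_eq, map_add] at *; exact N.add_mem ha hb)
      (fun {a} ha => by simp only [Set.mem_setOf_eq, map_neg] at *; exact N.neg_mem ha)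
      (fun {a b} hb => by
        simp only [Set.mem_setOf_eq, map_mul] at *; exact N.mul_mem_left _ _ hb)
      (fun {a b} ha => by
        simp only [Set.mem_setOf_eq, map_mul] at *; exact N.mul_mem_right _ _ ha)
    have hmemJ₁ : ∀ y : R, y ∈ J₁ ↔ (E⁻¹ : R ≃+* R) y ∈ N :=
      fun y => TwoSidedIdeal.mem_mk' _ _ _ _ _ _ y
    have hle : J₁ ≤ N := by
      refine hlargest J₁ n hn ?_
      intro l hlen hmem
      have h1 : ((E⁻¹ : R ≃+* R) : R →+* R) l.prod = (l.map ⇑(E⁻¹ : R ≃+* R)).prod :=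
        map_list_prod _ l
      have h2 : (l.map ⇑(E⁻¹ : R ≃+* R)).prod = 0 := by
        refine hNn _ (by simp [hlen]) ?_
        intro y hy
        obtain ⟨z, hz, rfl⟩ := List.mem_map.mp hy
        exact (hmemJ₁ z).mp (hmem z hz)
      have h3 : (E⁻¹ : R ≃+* R) l.prod = 0 := by
        rw [show (E⁻¹ : R ≃+* R) l.prod = ((E⁻¹ : R ≃+* R) : R →+* R) l.prod from rfl, h1, h2]
      have := congrArg (⇑E) h3
      rwa [show E ((E⁻¹ : R ≃+* R) l.prod) = l.prod from E.apply_symm_apply _, map_zero] at this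
    intro x hx
    refine hle ((hmemJ₁ (E x)).mpr ?_)
    rwa [show (E⁻¹ : R ≃+* R) (E x) = x from E.symm_apply_apply x]
  -- `σ⁻¹(N) ⊆ N` :
  have hEinvN : ∀ x ∈ N, (E⁻¹ : R ≃+* R) x ∈ N := by
    let J₂ : TwoSidedIdeal R := TwoSidedIdeal.mk' {y | E y ∈ N}
      (by simp only [Set.mem_setOf_eq, map_zero]; exact N.zero_mem)
      (fun {a b} ha hb => by
        simp only [Set.mem_setOf_eq, map_add] at *; exact N.add_mem ha hb)
      (fun {a} ha => by simp only [Set.mem_setOf_eq, map_neg] at *; exact N.neg_mem ha)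
      (fun {a b} hb => by
        simp only [Set.mem_setOf_eq, map_mul] at *; exact N.mul_mem_left _ _ hb)
      (fun {a b} ha => by
        simp only [Set.mem_setOf_eq, map_mul] at *; exact N.mul_mem_right _ _ ha)
    have hmemJ₂ : ∀ y : R, y ∈ J₂ ↔ E y ∈ N :=
      fun y => TwoSidedIdeal.mem_mk' _ _ _ _ _ _ y
    have hle : J₂ ≤ N := by
      refine hlargest J₂ n hn ?_
      intro l hlen hmem
      have h1 : (E : R →+* R) l.prod = (l.map ⇑E).prod := map_list_prod _ l
      have h2 : (l.map ⇑E).prod = 0 := by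
        refine hNn _ (by simp [hlen]) ?_
        intro y hy
        obtain ⟨z, hz, rfl⟩ := List.mem_map.mp hy
        exact (hmemJ₂ z).mp (hmem z hz)
      have h3 : E l.prod = 0 := by
        rw [show E l.prod = (E : R →+* R) l.prod from rfl, h1, h2]
      exact E.injective (by rwa [map_zero])
    intro x hx
    refine hle (((hmemJ₂ ((E⁻¹ : R ≃+* R) x))).mpr ?_)
    rwa [show E ((E⁻¹ : R ≃+* R) x) = x from E.apply_symm_apply x]
  -- main part
  intro x hx
  -- the two-sided ideal generated by `a := δ x`
  set a : R := δ x with ha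
  set S : Set R := {y | ∃ r s : R, y = r * a * s} with hS
  have hmul_l : ∀ c y : R, y ∈ AddSubgroup.closure S → c * y ∈ AddSubgroup.closure S := by
    intro c y hy
    refine AddSubgroup.closure_induction ?_ ?_ ?_ ?_ hy
    · rintro z ⟨r, s, rfl⟩
      exact AddSubgroup.subset_closure ⟨c * r, s, by noncomm_ring⟩
    · rw [mul_zero]; exact AddSubgroup.zero_mem _
    · intro z w _ _ hz hw; rw [mul_add]; exact AddSubgroup.add_mem _ hz hw
    · intro z _ hz; rw [mul_neg]; exact AddSubgroup.neg_mem _ hz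
  have hmul_r : ∀ c y : R, y ∈ AddSubgroup.closure S → y * c ∈ AddSubgroup.closure S := by
    intro c y hy
    refine AddSubgroup.closure_induction ?_ ?_ ?_ ?_ hy
    · rintro z ⟨r, s, rfl⟩
      exact AddSubgroup.subset_closure ⟨r, s * c, by noncomm_ring⟩
    · rw [zero_mul]; exact AddSubgroup.zero_mem _
    · intro z w _ _ hz hw; rw [add_mul]; exact AddSubgroup.add_mem _ hz hw
    · intro z _ hz; rw [neg_mul]; exact AddSubgroup.neg_mem _ hz
  let J : TwoSidedIdeal R := TwoSidedIdeal.mk' (AddSubgroup.closure S)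
    (AddSubgroup.zero_mem _)
    (fun {u v} hu hv => AddSubgroup.add_mem _ hu hv)
    (fun {u} hu => AddSubgroup.neg_mem _ hu)
    (fun {u v} hv => hmul_l u v hv)
    (fun {u v} hu => hmul_r v u hu)
  have hmemJ : ∀ y : R, y ∈ J ↔ y ∈ AddSubgroup.closure S :=
    fun y => TwoSidedIdeal.mem_mk' _ _ _ _ _ _ y
  have haJ : a ∈ J := by
    rw [hmemJ]
    exact AddSubgroup.subset_closure ⟨1, 1, by noncomm_ring⟩
  -- products of `n` generators of `J` lie in `N`
  have hGenN : ∀ l : List R, l.length = n → (∀ y ∈ l, ∃ r s : R, y = r * a * s) →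
      l.prod ∈ N := by
    have hGenForm : ∀ l : List R, (∀ y ∈ l, ∃ r s : R, y = r * a * s) →
        ∃ (r : R) (ts : List R), ts.length = l.length ∧
          l.prod = r * mixD δ (List.replicate l.length x) ts := by
      intro l
      induction l with
      | nil => exact fun _ => ⟨1, [], rfl, by simp [mixD]⟩
      | cons y l IH =>
        intro hmem
        obtain ⟨r₀, s₀, hy⟩ := hmem y (List.mem_cons_self)
        obtain ⟨r', ts', hlen', hprod'⟩ := IH (fun z hz => hmem z (List.mem_cons_of_mem y hz))
        refine ⟨r₀, (s₀ * r') :: ts', by simp [hlen'], ?_⟩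
        rw [List.prod_cons, hprod', hy, List.length_cons, List.replicate_succ, mixD, ← ha]
        noncomm_ring
    intro l hlen hmem
    obtain ⟨r, ts, hts, hprod⟩ := hGenForm l hmem
    rw [hlen] at hts hprod
    rw [hprod]
    refine N.mul_mem_left _ _ ?_
    refine mixD_mem q δ E hδadd hleibE hqskewE hEq hδq hqc N hEN hEinvN n hNn hfac
      (List.replicate n x) ts (by simp) hts ?_
    intro y hy
    rw [List.eq_of_mem_replicate hy]
    exact hx
  -- products of `n` elements of `J` lie in `N`
  have hJn : ∀ l : List R, l.length = n → (∀ y ∈ l, y ∈ J) → l.prod ∈ N := by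
    have hLift : ∀ l₂ l₁ : List R, (∀ y ∈ l₁, ∃ r s : R, y = r * a * s) →
        (∀ y ∈ l₂, y ∈ J) → (l₁ ++ l₂).length = n → (l₁ ++ l₂).prod ∈ N := by
      intro l₂
      induction l₂ with
      | nil =>
        intro l₁ h1 _ hlen
        rw [List.append_nil] at hlen ⊢
        exact hGenN l₁ hlen h1
      | cons y l₂ IH =>
        intro l₁ h1 h2 hlen
        have hyJ : y ∈ AddSubgroup.closure S :=
          (hmemJ y).mp (h2 y (List.mem_cons_self))
        have h2' : ∀ z ∈ l₂, z ∈ J := fun z hz => h2 z (List.mem_cons_of_mem y hz)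
        have key : ∀ w : R, w ∈ AddSubgroup.closure S → (l₁ ++ w :: l₂).prod ∈ N := by
          intro w hw
          refine AddSubgroup.closure_induction ?_ ?_ ?_ ?_ hw
          · intro z hzS
            have h1' : ∀ u ∈ l₁ ++ [z], ∃ r s : R, u = r * a * s := by
              intro u hu
              rcases List.mem_append.mp hu with h | h
              · exact h1 u h
              · rw [List.mem_singleton.mp h]; exact hzS
            have := IH (l₁ ++ [z]) h1' h2' (by simpa using hlen)
            rwa [List.append_assoc, List.singleton_append] at this
          · have : (l₁ ++ (0:R) :: l₂).prod = 0 := by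
              simp [List.prod_append, List.prod_cons]
            rw [this]; exact N.zero_mem
          · intro z w _ _ hz hw
            have : (l₁ ++ (z + w) :: l₂).prod
                = (l₁ ++ z :: l₂).prod + (l₁ ++ w :: l₂).prod := by
              simp only [List.prod_append, List.prod_cons]
              noncomm_ring
            rw [this]; exact N.add_mem hz hw
          · intro z _ hz
            have : (l₁ ++ (-z) :: l₂).prod = -(l₁ ++ z :: l₂).prod := by
              simp only [List.prod_append, List.prod_cons]
              noncomm_ring
            rw [this]; exact N.neg_mem hz
        exact key y hyJ
    intro l hlen hmem
    have := hLift l [] (by simp) hmem (by simpa using hlen)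
    simpa using this
  -- products of `n·n` elements of `J` vanish
  have hchunk : ∀ j : ℕ, ∀ l : List R, l.length = n * j → (∀ y ∈ l, y ∈ J) →
      ∃ l' : List R, l'.length = j ∧ (∀ y ∈ l', y ∈ N) ∧ l.prod = l'.prod := by
    intro j
    induction j with
    | zero =>
      intro l hlen _
      rw [Nat.mul_zero] at hlen
      rw [List.length_eq_zero_iff.mp hlen]
      exact ⟨[], rfl, by simp, rfl⟩
    | succ j IH =>
      intro l hlen hmem
      have hnle : n ≤ l.length := by rw [hlen]; nlinarith [hn]
      have htlen : (l.take n).length = n := by rw [List.length_take]; omega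
      have hdlen : (l.drop n).length = n * j := by rw [List.length_drop]; rw [hlen]; ring_nf; omega
      obtain ⟨l'', hl''len, hl''mem, hl''prod⟩ :=
        IH (l.drop n) hdlen (fun y hy => hmem y (List.drop_subset n l hy))
      have htN : (l.take n).prod ∈ N :=
        hJn (l.take n) htlen (fun y hy => hmem y (List.take_subset n l hy))
      refine ⟨(l.take n).prod :: l'', by simp [hl''len], ?_, ?_⟩
      · intro y hy
        rcases List.mem_cons.mp hy with h | h
        · rw [h]; exact htN
        · exact hl''mem y h
      · rw [List.prod_cons, ← hl''prod, List.prod_take_mul_prod_drop]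
  have hJnil : ∀ l : List R, l.length = n * n → (∀ y ∈ l, y ∈ J) → l.prod = 0 := by
    intro l hlen hmem
    obtain ⟨l', hl'len, hl'mem, hl'prod⟩ := hchunk n l hlen hmem
    rw [hl'prod]
    exact hNn l' hl'len hl'mem
  have hle : J ≤ N := hlargest J (n * n) (Nat.mul_pos hn hn) hJnil
  exact hle haJ
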